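/- Let K be a field of characteristic 0, R = K[z], p₁ = z², Q₁(y) = y + z·y², Q₂(y) = y − z·y², and let F(x,y) = −z⁻²·y + z⁻²·Q₂(z²·x + Q₁(y)). Then F(x,y) = x − 2y(zx + y²) − z(zx + y²)² ∈ R[x,y], and the pair (F(x,y), z²x + y + zy²) defines an R-algebra automorphism of R[x,y] (the Nagata automorphism). -/

import Mathlib

open MvPolynomial

/-- The Nagata automorphism: with `R = K[z]`, `p₁ = z²`, `Q₁(y) = y + zy²`,
`Q₂(y) = y − zy²`, the polynomial `F = −z⁻²y + z⁻²Q₂(z²x + Q₁(y))` satisfies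
`z²·F = −y + Q₂(z²x + Q₁(y))`, equals `x − 2y(zx+y²) − z(zx+y²)²`, and the pair
`(F, z²x + y + zy²)` defines an `R`-algebra automorphism of `R[x,y]`. -/
theorem nagata_automorphism (K : Type*) [Field K] [CharZero K]
    (z : MvPolynomial (Fin 2) (Polynomial K)) (hz : z = C Polynomial.X)
    (F : MvPolynomial (Fin 2) (Polynomial K))
    (hF : F = X 0 - 2 * X 1 * (z * X 0 + X 1 ^ 2) - z * (z * X 0 + X 1 ^ 2) ^ 2) :
    z ^ 2 * F =
      -(X 1) + ((z ^ 2 * X 0 + (X 1 + z * X 1 ^ 2)) -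
        z * (z ^ 2 * X 0 + (X 1 + z * X 1 ^ 2)) ^ 2) ∧
    ∃ σ : MvPolynomial (Fin 2) (Polynomial K) ≃ₐ[Polynomial K]
        MvPolynomial (Fin 2) (Polynomial K),
      σ (X 0) = F ∧ σ (X 1) = z ^ 2 * X 0 + X 1 + z * X 1 ^ 2 := by
  constructor
  · subst hF; ring
  · set zz : MvPolynomial (Fin 2) (Polynomial K) := C Polynomial.X with hzz
    set w : MvPolynomial (Fin 2) (Polynomial K) := zz * X 0 + X 1 ^ 2 with hw
    -- forward map images
    set P0 : MvPolynomial (Fin 2) (Polynomial K) := X 0 - 2 * X 1 * w - zz * w ^ 2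
    set P1 : MvPolynomial (Fin 2) (Polynomial K) := X 1 + zz * w
    -- inverse map images
    set Q0 : MvPolynomial (Fin 2) (Polynomial K) := X 0 + 2 * X 1 * w - zz * w ^ 2
    set Q1 : MvPolynomial (Fin 2) (Polynomial K) := X 1 - zz * w
    let f : MvPolynomial (Fin 2) (Polynomial K) →ₐ[Polynomial K]
        MvPolynomial (Fin 2) (Polynomial K) := aeval ![P0, P1]
    let g : MvPolynomial (Fin 2) (Polynomial K) →ₐ[Polynomial K]
        MvPolynomial (Fin 2) (Polynomial K) := aeval ![Q0, Q1]
    have k1 : f (g (X 0)) = X 0 := by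
      simp only [f, g, aeval_X, Matrix.cons_val_zero, Matrix.cons_val_one, Matrix.head_cons,
        P0, P1, Q0, Q1, w, zz, map_sub, map_add, map_mul, map_pow, map_ofNat, aeval_C,
        algebraMap_eq]
      ring
    have k2 : f (g (X 1)) = X 1 := by
      simp only [f, g, aeval_X, Matrix.cons_val_zero, Matrix.cons_val_one, Matrix.head_cons,
        P0, P1, Q0, Q1, w, zz, map_sub, map_add, map_mul, map_pow, map_ofNat, aeval_C,
        algebraMap_eq]
      ring
    have k3 : g (f (X 0)) = X 0 := by
      simp only [f, g, aeval_X, Matrix.cons_val_zero, Matrix.cons_val_one, Matrix.head_cons,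
        P0, P1, Q0, Q1, w, zz, map_sub, map_add, map_mul, map_pow, map_ofNat, aeval_C,
        algebraMap_eq]
      ring
    have k4 : g (f (X 1)) = X 1 := by
      simp only [f, g, aeval_X, Matrix.cons_val_zero, Matrix.cons_val_one, Matrix.head_cons,
        P0, P1, Q0, Q1, w, zz, map_sub, map_add, map_mul, map_pow, map_ofNat, aeval_C,
        algebraMap_eq]
      ring
    refine ⟨AlgEquiv.ofAlgHom f g ?_ ?_, ?_, ?_⟩
    · exact algHom_ext fun i => by fin_cases i; exacts [k1, k2]
    · exact algHom_ext fun i => by fin_cases i; exacts [k3, k4]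
    · show f (X 0) = F
      simp only [f, aeval_X, Matrix.cons_val_zero, P0, w, zz, hF, hz]
    · show f (X 1) = _
      simp only [f, aeval_X, Matrix.cons_val_one, Matrix.head_cons, Matrix.cons_val_zero, P1, w, zz, hz]
      ring
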